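/- Let C be a cycle of length ℓ ≥ 4 in a tournament T, and suppose C belongs to a set 𝒞 of k arc-disjoint cycles in T that minimizes the total length ∑_{C'∈𝒞} |C'|. Then for every pair of non-consecutive vertices v_i, v_j of C, the arc of T between v_i and v_j belongs to some cycle of 𝒞 other than C. -/

import Mathlib

variable {V : Type*}

/-- A directed cycle in the digraph with arc relation `A`: a nonempty duplicate-free
list of at least two vertices such that every cyclically-consecutive pair is an arc. -/
structure DCycle (A : V → V → Prop) where
  verts : List V
  two_le : 2 ≤ verts.length
  nodup : verts.Nodup
  arcs_rel : ∀ p ∈ verts.zip (verts.rotate 1), A p.1 p.2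

/-- The set of arcs of a cycle (cyclically consecutive pairs of its vertex list). -/
def DCycle.arcs {A : V → V → Prop} (c : DCycle A) : Set (V × V) :=
  {p | p ∈ c.verts.zip (c.verts.rotate 1)}

/-- Two cycles are arc-disjoint if they share no arc. -/
def ArcDisjoint {A : V → V → Prop} (c₁ c₂ : DCycle A) : Prop :=
  Disjoint c₁.arcs c₂.arcs

/-- A tournament: irreflexive, and between any two distinct vertices exactly one arc. -/
def IsTournament (A : V → V → Prop) : Prop :=
  (∀ v, ¬ A v v) ∧ ∀ u v : V, u ≠ v → (A u v ↔ ¬ A v u)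

/-- `F` is a feedback arc set of the digraph with arc relation `A`. -/
def IsFAS (A : V → V → Prop) (F : Set (V × V)) : Prop :=
  (∀ p ∈ F, A p.1 p.2) ∧ IsEmpty (DCycle (fun u v => A u v ∧ (u, v) ∉ F))

lemma getElem_idx {l : List V} {i j : ℕ} (hij : i = j) {hi : i < l.length} :
    l[i]'hi = l[j]'(hij ▸ hi) := by subst hij; rfl

lemma mem_cp_iff {L : List V} {p : V × V} (hn : 0 < L.length) :
    p ∈ L.zip (L.rotate 1) ↔ ∃ i, ∃ h : i < L.length,
      p = (L[i], L[(i+1) % L.length]'(Nat.mod_lt _ hn)) := by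
  have hlen : (L.zip (L.rotate 1)).length = L.length := by
    rw [List.length_zip, List.length_rotate, min_self]
  rw [List.mem_iff_getElem]
  constructor
  · rintro ⟨i, h, rfl⟩
    rw [hlen] at h
    refine ⟨i, h, ?_⟩
    rw [List.getElem_zip, List.getElem_rotate]
  · rintro ⟨i, h, rfl⟩
    refine ⟨i, by rwa [hlen], ?_⟩
    rw [List.getElem_zip, List.getElem_rotate]

lemma cp_rotate_subset {L : List V} (m : ℕ) (hn : 0 < L.length) {p : V × V}
    (hp : p ∈ (L.rotate m).zip ((L.rotate m).rotate 1)) : p ∈ L.zip (L.rotate 1) := by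
  have hn' : 0 < (L.rotate m).length := by rwa [List.length_rotate]
  rw [mem_cp_iff hn'] at hp
  rw [mem_cp_iff hn]
  obtain ⟨i, h, rfl⟩ := hp
  refine ⟨(i + m) % L.length, Nat.mod_lt _ hn, ?_⟩
  have e1 : (L.rotate m)[i] = L[(i+m) % L.length]'(Nat.mod_lt _ hn) :=
    List.getElem_rotate L m i h
  have e2 : (L.rotate m)[(i+1) % (L.rotate m).length]'(Nat.mod_lt _ hn')
      = L[((i + m) % L.length + 1) % L.length]'(Nat.mod_lt _ hn) := by
    rw [List.getElem_rotate]
    apply getElem_idx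
    rw [List.length_rotate, Nat.mod_add_mod, Nat.mod_add_mod]
    ring_nf
  rw [e1, e2]

lemma key [Fintype V] (A : V → V → Prop) (k : ℕ)
    (c : Fin k → DCycle A) (hdisj : ∀ i j, i ≠ j → ArcDisjoint (c i) (c j))
    (hmin : ∀ c' : Fin k → DCycle A, (∀ i j, i ≠ j → ArcDisjoint (c' i) (c' j)) →
      ∑ i, (c i).verts.length ≤ ∑ i, (c' i).verts.length)
    (i₀ : Fin k) (u w : V) (hA : A u w)
    (hu : u ∈ (c i₀).verts) (hw : w ∈ (c i₀).verts) (huw : u ≠ w)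
    (h1 : (u, w) ∉ (c i₀).arcs)
    (hnot : ∀ j, j ≠ i₀ → (u, w) ∉ (c j).arcs) : False := by
  classical
  set L := (c i₀).verts with hLdef
  set n := L.length with hndef
  have hn : 0 < n := lt_of_lt_of_le (by norm_num) (c i₀).two_le
  obtain ⟨m, hm, hmw⟩ := List.mem_iff_getElem.mp hw
  set L' := L.rotate m with hL'def
  have hL'len : L'.length = n := List.length_rotate _ _
  have hn' : 0 < L'.length := by rwa [hL'len]
  have hL'0 : L'[0]'hn' = w := by
    have h : L'[0]'hn' = L[(0+m) % L.length]'(Nat.mod_lt _ hn) :=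
      List.getElem_rotate L m 0 hn'
    have e : (0 + m) % L.length = m := by
      rw [Nat.zero_add]; exact Nat.mod_eq_of_lt hm
    rw [h, getElem_idx e]; exact hmw
  have hu' : u ∈ L' := List.mem_rotate.mpr hu
  obtain ⟨t, ht, htu⟩ := List.mem_iff_getElem.mp hu'
  have ht' : t < n := by rwa [hL'len] at ht
  have ht0 : t ≠ 0 := by
    rintro rfl
    exact huw (htu.symm.trans hL'0)
  have hcp : ∀ p ∈ L'.zip (L'.rotate 1), p ∈ (c i₀).arcs := fun p hp =>
    cp_rotate_subset m hn hp
  -- t + 1 < n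
  have htn : t + 1 < n := by
    rcases Nat.lt_or_ge (t+1) n with h | h
    · exact h
    exfalso
    apply h1
    apply hcp
    rw [mem_cp_iff hn']
    refine ⟨t, ht, ?_⟩
    have e : (t + 1) % L'.length = 0 := by
      rw [hL'len, show t + 1 = n by omega, Nat.mod_self]
    rw [htu, getElem_idx e, hL'0]
  set N := L'.take (t+1) with hNdef
  have hNlen : N.length = t + 1 := by
    rw [hNdef, List.length_take, hL'len]
    omega
  have hNpos : 0 < N.length := by omega
  have hNget : ∀ i (h : i < t + 1), N[i]'(by omega) = L'[i]'(by omega) := by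
    intro i h
    exact List.getElem_take
  have hsub : ∀ p ∈ N.zip (N.rotate 1), p ∈ (c i₀).arcs ∨ p = (u, w) := by
    intro p hp
    rw [mem_cp_iff hNpos] at hp
    obtain ⟨i, h, rfl⟩ := hp
    have h' : i < t + 1 := by omega
    rcases Nat.lt_or_ge i t with hi | hi
    · left
      apply hcp
      rw [mem_cp_iff hn']
      refine ⟨i, by omega, ?_⟩
      have e : (i + 1) % N.length = i + 1 := Nat.mod_eq_of_lt (by omega)
      have e' : (i + 1) % L'.length = i + 1 := Nat.mod_eq_of_lt (by omega)
      rw [getElem_idx e, getElem_idx e', hNget i h', hNget (i+1) (by omega)]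
    · right
      have hit : i = t := by omega
      subst hit
      have e : (i + 1) % N.length = 0 := by rw [hNlen]; exact Nat.mod_self _
      rw [getElem_idx e, hNget i h', htu, hNget 0 (by omega), hL'0]
  let newC : DCycle A :=
    { verts := N
      two_le := by omega
      nodup := List.Nodup.sublist (List.take_sublist _ _)
        (List.nodup_rotate.mpr (c i₀).nodup)
      arcs_rel := by
        intro p hp
        rcases hsub p hp with h | h
        · exact (c i₀).arcs_rel p h
        · rw [h]; exact hA }
  have hnewlen : newC.verts.length = t + 1 := hNlen
  have hnewarcs : ∀ p ∈ newC.arcs, p ∈ (c i₀).arcs ∨ p = (u, w) := hsub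
  set c' := Function.update c i₀ newC with hc'def
  have hdisjnew : ∀ j, j ≠ i₀ → ArcDisjoint newC (c j) := by
    intro j hj
    rw [ArcDisjoint, Set.disjoint_left]
    intro p hp hpj
    rcases hnewarcs p hp with h | h
    · exact Set.disjoint_left.mp (hdisj i₀ j (Ne.symm hj)) h hpj
    · exact hnot j hj (h ▸ hpj)
  have hdisj' : ∀ i j, i ≠ j → ArcDisjoint (c' i) (c' j) := by
    intro i j hij
    rcases eq_or_ne i i₀ with rfl | hi
    · rw [hc'def, Function.update_self, Function.update_of_ne (Ne.symm hij)]
      exact hdisjnew j (Ne.symm hij)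
    · rcases eq_or_ne j i₀ with rfl | hj
      · rw [hc'def, Function.update_self, Function.update_of_ne hi]
        exact (hdisjnew i hi).symm
      · rw [hc'def, Function.update_of_ne hi, Function.update_of_ne hj]
        exact hdisj i j hij
  have hle := hmin c' hdisj'
  have hfn : (fun i => (c' i).verts.length)
      = Function.update (fun i => (c i).verts.length) i₀ (t + 1) := by
    funext i
    rcases eq_or_ne i i₀ with rfl | hi
    · rw [Function.update_self, hc'def, Function.update_self]
      exact hnewlen
    · rw [Function.update_of_ne hi, hc'def, Function.update_of_ne hi]
  rw [hfn] at hle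
  rw [Finset.sum_update_of_mem (Finset.mem_univ i₀)] at hle
  have hsum : ∑ i, (c i).verts.length
      = n + ∑ x ∈ Finset.univ \ {i₀}, (c x).verts.length := by
    rw [← Finset.erase_eq]
    exact (Finset.add_sum_erase _ _ (Finset.mem_univ i₀)).symm
  rw [hsum] at hle
  omega

/-- In a minimum-total-length family of `k` arc-disjoint cycles in a tournament,
for any cycle `c i₀` of length at least 4 and any pair of non-consecutive vertices
`u, w` on it, the arc of the tournament between `u` and `w` lies in some other
cycle of the family. -/
theorem stmt2 [Fintype V] (A : V → V → Prop) (hT : IsTournament A) (k : ℕ)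
    (c : Fin k → DCycle A) (hdisj : ∀ i j, i ≠ j → ArcDisjoint (c i) (c j))
    (hmin : ∀ c' : Fin k → DCycle A, (∀ i j, i ≠ j → ArcDisjoint (c' i) (c' j)) →
      ∑ i, (c i).verts.length ≤ ∑ i, (c' i).verts.length)
    (i₀ : Fin k) (h4 : 4 ≤ (c i₀).verts.length)
    (u w : V) (hu : u ∈ (c i₀).verts) (hw : w ∈ (c i₀).verts) (huw : u ≠ w)
    (h1 : (u, w) ∉ (c i₀).arcs) (h2 : (w, u) ∉ (c i₀).arcs) :
    ∃ j, j ≠ i₀ ∧ ((u, w) ∈ (c j).arcs ∨ (w, u) ∈ (c j).arcs) := by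
  by_contra hcon
  push_neg at hcon
  by_cases hc : A u w
  · exact key A k c hdisj hmin i₀ u w hc hu hw huw h1
      (fun j hj hmem => (hcon j hj).1 hmem)
  · have hc' : A w u := by
      by_contra hc''
      exact hc ((hT.2 u w huw).mpr hc'')
    exact key A k c hdisj hmin i₀ w u hc' hw hu (Ne.symm huw) h2
      (fun j hj hmem => (hcon j hj).2 hmem)
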